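/- Define, for h > 0, the deformed triangle addition on ℝ≥0 by a ⊞ₕ b = {c ∈ ℝ≥0 : |a^{1/h} − b^{1/h}|^h ≤ c ≤ (a^{1/h} + b^{1/h})^h}. Then for a ≠ b, both endpoints |a^{1/h} − b^{1/h}|^h and (a^{1/h} + b^{1/h})^h tend to max(a,b) as h → 0⁺, while for a = b > 0 the lower endpoint is 0 and the upper endpoint (2a^{1/h})^h = 2^h·a tends to a as h → 0⁺. -/

import Mathlib

open Filter Set Real

lemma aux_c (c : ℝ) (hc0 : 0 ≤ c) (hc1 : c < 1) :
    Tendsto (fun h : ℝ => c ^ (1 / h)) (nhdsWithin 0 (Ioi 0)) (nhds 0) := by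
  rcases eq_or_lt_of_le hc0 with h0 | h0
  · apply Tendsto.congr' (f₁ := fun _ => (0:ℝ))
    · filter_upwards [self_mem_nhdsWithin] with h hh
      have hh' : (0:ℝ) < h := hh
      rw [← h0, Real.zero_rpow (one_div_ne_zero hh'.ne')]
    · exact tendsto_const_nhds
  · have := (tendsto_rpow_atTop_of_base_lt_one c (by linarith) hc1).comp
      (tendsto_inv_nhdsGT_zero (𝕜 := ℝ))
    simpa [Function.comp_def, one_div] using this

lemma rpow_one_div_rpow (a : ℝ) (ha : 0 ≤ a) {h : ℝ} (hh : h ≠ 0) :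
    (a ^ (1/h)) ^ h = a := by
  rw [← Real.rpow_mul ha, one_div_mul_cancel hh, Real.rpow_one]

lemma aux_main (a b : ℝ) (hb : 0 ≤ b) (hba : b < a) :
    Tendsto (fun h : ℝ => |a ^ (1 / h) - b ^ (1 / h)| ^ h)
      (nhdsWithin 0 (Ioi 0)) (nhds a) ∧
    Tendsto (fun h : ℝ => (a ^ (1 / h) + b ^ (1 / h)) ^ h)
      (nhdsWithin 0 (Ioi 0)) (nhds a) := by
  have ha : 0 < a := lt_of_le_of_lt hb hba
  set c := b / a with hc
  have hc0 : 0 ≤ c := div_nonneg hb ha.le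
  have hc1 : c < 1 := (div_lt_one ha).2 hba
  have htc := aux_c c hc0 hc1
  have hbs : ∀ h : ℝ, b ^ (1/h) = a ^ (1/h) * c ^ (1/h) := fun h => by
    rw [← Real.mul_rpow ha.le hc0, mul_div_cancel₀ _ ha.ne']
  have hev1 : ∀ᶠ h : ℝ in nhdsWithin 0 (Ioi 0), c ^ (1/h) < 1 := by
    have := htc.eventually (eventually_lt_nhds one_pos)
    simpa using this
  have hevh : ∀ᶠ h : ℝ in nhdsWithin 0 (Ioi 0), 0 < h ∧ h ≤ 1 := by
    filter_upwards [self_mem_nhdsWithin, Ioo_mem_nhdsGT one_pos] with h h1 h2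
    exact ⟨h1, h2.2.le⟩
  constructor
  · -- lower endpoint
    have hlo : Tendsto (fun h : ℝ => a * (1 - c ^ (1/h))) (nhdsWithin 0 (Ioi 0)) (nhds a) := by
      have : Tendsto (fun h : ℝ => a * (1 - c ^ (1/h))) (nhdsWithin 0 (Ioi 0))
          (nhds (a * (1 - 0))) := (tendsto_const_nhds.sub htc).const_mul a
      simpa using this
    refine tendsto_of_tendsto_of_tendsto_of_le_of_le' hlo tendsto_const_nhds ?_ ?_
    · filter_upwards [hev1, hevh] with h h1 ⟨hh, hh1⟩
      have hcp : 0 ≤ c ^ (1/h) := Real.rpow_nonneg hc0 _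
      have hkey : |a ^ (1/h) - b ^ (1/h)| ^ h = a * (1 - c ^ (1/h)) ^ h := by
        rw [hbs, ← mul_one_sub, abs_of_nonneg
          (mul_nonneg (Real.rpow_nonneg ha.le _) (by linarith)),
          Real.mul_rpow (Real.rpow_nonneg ha.le _) (by linarith),
          rpow_one_div_rpow a ha.le hh.ne']
      rw [hkey]
      have : (1 - c ^ (1/h)) ^ (1:ℝ) ≤ (1 - c ^ (1/h)) ^ h :=
        Real.rpow_le_rpow_of_exponent_ge (x := 1 - c ^ (1/h)) (by linarith) (by linarith) hh1
      rw [Real.rpow_one] at this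
      exact mul_le_mul_of_nonneg_left this ha.le
    · filter_upwards [hevh] with h ⟨hh, _⟩
      have h1 : |a ^ (1/h) - b ^ (1/h)| ≤ a ^ (1/h) := by
        rw [hbs]
        have hcp : 0 ≤ c ^ (1/h) := Real.rpow_nonneg hc0 _
        have hle : c ^ (1/h) ≤ 1 := Real.rpow_le_one hc0 hc1.le (by positivity)
        rw [abs_of_nonneg] <;> nlinarith [Real.rpow_nonneg ha.le (1/h)]
      calc |a ^ (1/h) - b ^ (1/h)| ^ h ≤ (a ^ (1/h)) ^ h :=
            Real.rpow_le_rpow (abs_nonneg _) h1 hh.le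
        _ = a := rpow_one_div_rpow a ha.le hh.ne'
  · -- upper endpoint
    have hhi : Tendsto (fun h : ℝ => a * (1 + c ^ (1/h))) (nhdsWithin 0 (Ioi 0)) (nhds a) := by
      have : Tendsto (fun h : ℝ => a * (1 + c ^ (1/h))) (nhdsWithin 0 (Ioi 0))
          (nhds (a * (1 + 0))) := (tendsto_const_nhds.add htc).const_mul a
      simpa using this
    refine tendsto_of_tendsto_of_tendsto_of_le_of_le' tendsto_const_nhds hhi ?_ ?_
    · filter_upwards [hevh] with h ⟨hh, _⟩
      have h1 : a ^ (1/h) ≤ a ^ (1/h) + b ^ (1/h) := by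
        nlinarith [Real.rpow_nonneg hb (1/h)]
      calc a = (a ^ (1/h)) ^ h := (rpow_one_div_rpow a ha.le hh.ne').symm
        _ ≤ (a ^ (1/h) + b ^ (1/h)) ^ h :=
            Real.rpow_le_rpow (Real.rpow_nonneg ha.le _) h1 hh.le
    · filter_upwards [hevh] with h ⟨hh, hh1⟩
      have hcp : 0 ≤ c ^ (1/h) := Real.rpow_nonneg hc0 _
      have hkey : (a ^ (1/h) + b ^ (1/h)) ^ h = a * (1 + c ^ (1/h)) ^ h := by
        rw [hbs, ← mul_one_add,
          Real.mul_rpow (Real.rpow_nonneg ha.le _) (by linarith),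
          rpow_one_div_rpow a ha.le hh.ne']
      rw [hkey]
      have : (1 + c ^ (1/h)) ^ h ≤ (1 + c ^ (1/h)) ^ (1:ℝ) :=
        Real.rpow_le_rpow_of_exponent_le (by linarith) hh1
      rw [Real.rpow_one] at this
      exact mul_le_mul_of_nonneg_left this ha.le

/-- for the deformed triangle addition
`a ⊞ₕ b = {c : |a^(1/h) − b^(1/h)|^h ≤ c ≤ (a^(1/h) + b^(1/h))^h}` on
nonnegative reals: if `a ≠ b` both endpoints tend to `max a b` as `h → 0⁺`,
while if `a = b > 0` the lower endpoint is `0`, the upper endpoint equals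
`2^h·a`, and the upper endpoint tends to `a` as `h → 0⁺`. -/
theorem triangle_dequantization (a b : ℝ) (ha : 0 ≤ a) (hb : 0 ≤ b) :
    (a ≠ b →
      Tendsto (fun h : ℝ => |a ^ (1 / h) - b ^ (1 / h)| ^ h)
        (nhdsWithin 0 (Ioi 0)) (nhds (max a b)) ∧
      Tendsto (fun h : ℝ => (a ^ (1 / h) + b ^ (1 / h)) ^ h)
        (nhdsWithin 0 (Ioi 0)) (nhds (max a b))) ∧
    (a = b → 0 < a →
      (∀ h : ℝ, 0 < h → |a ^ (1 / h) - b ^ (1 / h)| ^ h = 0) ∧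
      (∀ h : ℝ, 0 < h → (a ^ (1 / h) + b ^ (1 / h)) ^ h = 2 ^ h * a) ∧
      Tendsto (fun h : ℝ => (a ^ (1 / h) + b ^ (1 / h)) ^ h)
        (nhdsWithin 0 (Ioi 0)) (nhds a)) := by
  constructor
  · intro hab
    rcases lt_or_gt_of_ne hab with h | h
    · have := aux_main b a ha h
      rw [max_eq_right h.le]
      refine ⟨this.1.congr fun x => by rw [abs_sub_comm], this.2.congr fun x => by ring_nf⟩
    · have := aux_main a b hb h
      rw [max_eq_left h.le]
      exact this
  · intro hab ha0
    subst hab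
    have key : ∀ h : ℝ, 0 < h → (a ^ (1/h) + a ^ (1/h)) ^ h = 2 ^ h * a := by
      intro h hh
      rw [← two_mul, Real.mul_rpow (by norm_num) (Real.rpow_nonneg ha _),
        rpow_one_div_rpow a ha hh.ne']
    refine ⟨fun h hh => by simp [Real.zero_rpow hh.ne'], key, ?_⟩
    have h2 : Tendsto (fun h : ℝ => (2:ℝ) ^ h * a) (nhdsWithin 0 (Ioi 0)) (nhds a) := by
      have hcont : Continuous fun h : ℝ => (2:ℝ) ^ h * a :=
        (continuous_const.rpow continuous_id fun _ => Or.inl two_ne_zero).mul continuous_const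
      have := (hcont.tendsto 0).mono_left (nhdsWithin_le_nhds (s := Ioi (0:ℝ)))
      simpa using this
    apply Tendsto.congr' ?_ h2
    filter_upwards [self_mem_nhdsWithin] with h hh
    exact (key h hh).symm
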